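/- Let T > 0, α ∈ (1/2, 1) and c > 0, and let g : [0,T) → ℝ be measurable with 0 < g(t) ≤ c(T−t)^α and g(t)^{−1} ≤ c(1 + (T−t)^{−α}) for all t ∈ [0,T). Let A ∈ ℝ^{n×n}, let b ∈ ℝ^{n×n} be invertible, and let G : [0,T] → ℝ^{n×n} be measurable with each G(t) symmetric positive definite and ‖G(t)‖ ≤ C for all t, for some constant C > 0. Set Γ(t) = g(t)G(t) and Q(t) = e^{A(T−t)} b Γ(t)^{−1} b^⊤ e^{A^⊤(T−t)}. Then there exists λ > 0, depending only on A, b, c, C, n and T, such that v^⊤ Q(t) v ≥ λ (T−t)^{−α} |v|² for all t ∈ [0,T) and all v ∈ ℝ^n. -/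

import Mathlib

open MeasureTheory Matrix Set

noncomputable def mexp {n : ℕ} (M : Matrix (Fin n) (Fin n) ℝ) : Matrix (Fin n) (Fin n) ℝ :=
  NormedSpace.exp M

lemma dot_self_nonneg {n : ℕ} (w : Fin n → ℝ) : 0 ≤ w ⬝ᵥ w :=
  Finset.sum_nonneg fun j _ => mul_self_nonneg _

lemma aux_inv_bound {n : ℕ} {H : Matrix (Fin n) (Fin n) ℝ} (hH : H.PosDef) {C : ℝ} (hC : 0 < C)
    (hHb : ∀ v : Fin n → ℝ, H.mulVec v ⬝ᵥ H.mulVec v ≤ C ^ 2 * (v ⬝ᵥ v)) (w : Fin n → ℝ) :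
    C⁻¹ * (w ⬝ᵥ w) ≤ w ⬝ᵥ H⁻¹.mulVec w := by
  classical
  have hsym : Hᵀ = H := by simpa using hH.1.eq
  have swap : ∀ x y : Fin n → ℝ, x ⬝ᵥ H *ᵥ y = y ⬝ᵥ H *ᵥ x := by
    intro x y
    rw [dotProduct_mulVec, ← Matrix.mulVec_transpose, hsym, dotProduct_comm]
  have hpos : ∀ x : Fin n → ℝ, 0 ≤ x ⬝ᵥ H *ᵥ x := by
    intro x
    have := hH.posSemidef.dotProduct_mulVec_nonneg x
    simpa using this
  have hdet : IsUnit H.det := isUnit_iff_ne_zero.mpr hH.det_pos.ne'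
  set u : Fin n → ℝ := H⁻¹ *ᵥ w with hu_def
  have hu : H *ᵥ u = w := by
    rw [hu_def, Matrix.mulVec_mulVec, Matrix.mul_nonsing_inv _ hdet, Matrix.one_mulVec]
  set a := u ⬝ᵥ H *ᵥ u with ha_def
  set d := w ⬝ᵥ H *ᵥ w with hd_def
  have hb2 : u ⬝ᵥ H *ᵥ w = w ⬝ᵥ w := by rw [swap, hu]
  have hgoal : w ⬝ᵥ H⁻¹ *ᵥ w = a := by
    rw [ha_def]
    conv_rhs => rw [swap, hu]
    rw [dotProduct_comm]
  rw [hgoal]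
  by_cases hw : w = 0
  · simp [hw, ha_def, hu_def]
  · have hww : 0 < w ⬝ᵥ w := by
      rcases lt_or_eq_of_le (dot_self_nonneg w) with h | h
      · exact h
      · exact absurd ((dotProduct_self_eq_zero).mp h.symm) hw
    have key : ∀ x : ℝ, 0 ≤ d * (x * x) + -(2 * (w ⬝ᵥ w)) * x + a := by
      intro x
      have h0 := hpos (x • w - u)
      have hswap := swap w u
      have e : (x • w - u) ⬝ᵥ H *ᵥ (x • w - u)
          = d * (x * x) + -(2 * (w ⬝ᵥ w)) * x + a := by
        simp only [Matrix.mulVec_sub, Matrix.mulVec_smul, sub_dotProduct, dotProduct_sub,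
          smul_dotProduct, dotProduct_smul, smul_eq_mul, hd_def, ha_def]
        rw [hswap, hb2]
        ring
      linarith [e ▸ h0]
    have hdisc := discrim_le_zero key
    rw [discrim] at hdisc
    -- hdisc : (-(2*(w⬝w)))^2 - 4*d*a ≤ 0
    have ha0 : 0 ≤ a := hpos u
    have hd0 : 0 ≤ d := hpos w
    -- d ≤ C * (w⬝w)
    have hdC : d ≤ C * (w ⬝ᵥ w) := by
      have hcs : (∑ i, w i * (H *ᵥ w) i) ^ 2 ≤ (∑ i, w i ^ 2) * (∑ i, (H *ᵥ w) i ^ 2) :=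
        Finset.sum_mul_sq_le_sq_mul_sq _ _ _
      have e1 : d = ∑ i, w i * (H *ᵥ w) i := rfl
      have e2 : (∑ i, w i ^ 2) = w ⬝ᵥ w := by simp [dotProduct, sq]
      have e3 : (∑ i, (H *ᵥ w) i ^ 2) = (H *ᵥ w) ⬝ᵥ (H *ᵥ w) := by simp [dotProduct, sq]
      have hb' := hHb w
      rw [e2, e3, ← e1] at hcs
      have h4 : d ^ 2 ≤ (C * (w ⬝ᵥ w)) ^ 2 := by
        nlinarith [hcs, mul_le_mul_of_nonneg_left hb' hww.le]
      nlinarith [h4, hd0, mul_nonneg hC.le hww.le]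
    rw [inv_mul_le_iff₀ hC]
    have h5 : (w ⬝ᵥ w) ^ 2 ≤ C * (w ⬝ᵥ w) * a := by
      nlinarith [hdisc, mul_le_mul_of_nonneg_right hdC ha0]
    nlinarith [h5, hww]

/-- Under condition (GG) on `g` (`α ∈ (1/2,1)`, `c > 0`), with `b`
invertible, `G(t)` symmetric positive definite with operator norm bounded by `C`, and
`Q(t) = e^{A(T-t)} b Γ(t)⁻¹ bᵀ e^{Aᵀ(T-t)}` where `Γ(t) = g(t) G(t)`, there exists
`λ > 0` such that `vᵀ Q(t) v ≥ λ (T-t)^{-α} |v|²` for all `t ∈ [0,T)`, `v ∈ ℝ^n`. -/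
theorem stmt4 {n : ℕ} {T α c C : ℝ} (hT : 0 < T) (hα1 : 1 / 2 < α) (hα2 : α < 1)
    (hc : 0 < c) (hC : 0 < C)
    (g : ℝ → ℝ) (hgm : Measurable g)
    (hg1 : ∀ t ∈ Ico (0 : ℝ) T, 0 < g t ∧ g t ≤ c * (T - t) ^ α)
    (hg2 : ∀ t ∈ Ico (0 : ℝ) T, (g t)⁻¹ ≤ c * (1 + (T - t) ^ (-α)))
    (A b : Matrix (Fin n) (Fin n) ℝ) (hb : IsUnit b.det)
    (G : ℝ → Matrix (Fin n) (Fin n) ℝ)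
    (hGm : ∀ i j, Measurable fun t => G t i j)
    (hG : ∀ t ∈ Icc (0 : ℝ) T, (G t).PosDef)
    (hGb : ∀ t ∈ Icc (0 : ℝ) T, ∀ v : Fin n → ℝ,
      (G t).mulVec v ⬝ᵥ (G t).mulVec v ≤ C ^ 2 * (v ⬝ᵥ v))
    (Γ Q : ℝ → Matrix (Fin n) (Fin n) ℝ)
    (hΓ : ∀ t, Γ t = g t • G t)
    (hQ : ∀ t, Q t = mexp ((T - t) • A) * b * (Γ t)⁻¹ * bᵀ * mexp ((T - t) • Aᵀ)) :
    ∃ lam > (0 : ℝ), ∀ t ∈ Ico (0 : ℝ) T, ∀ v : Fin n → ℝ,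
      lam * (T - t) ^ (-α) * (v ⬝ᵥ v) ≤ v ⬝ᵥ (Q t).mulVec v := by
  classical
  have hbT : IsUnit (bᵀ).det := by rwa [Matrix.det_transpose]
  set N : ℝ → Matrix (Fin n) (Fin n) ℝ := fun s => mexp ((-s) • Aᵀ) * (bᵀ)⁻¹ with hN_def
  have hNM : ∀ s : ℝ, N s * (bᵀ * mexp (s • Aᵀ)) = 1 := by
    intro s
    have hcomm : Commute ((-s) • Aᵀ) (s • Aᵀ) :=
      ((Commute.refl Aᵀ).smul_right s).smul_left (-s)
    have h1 : mexp ((-s) • Aᵀ) * mexp (s • Aᵀ) = 1 := by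
      rw [mexp, mexp, ← Matrix.exp_add_of_commute _ _ hcomm, ← add_smul, neg_add_cancel,
        zero_smul, NormedSpace.exp_zero]
    calc N s * (bᵀ * mexp (s • Aᵀ))
        = mexp ((-s) • Aᵀ) * (((bᵀ)⁻¹ * bᵀ) * mexp (s • Aᵀ)) := by
          simp only [hN_def, Matrix.mul_assoc]
      _ = 1 := by rw [Matrix.nonsing_inv_mul _ hbT, Matrix.one_mul, h1]
  -- continuity and compact bound
  have hcontN : Continuous N := by
    have h1 : Continuous fun s : ℝ => mexp ((-s) • Aᵀ) := by
      letI : SeminormedRing (Matrix (Fin n) (Fin n) ℝ) := Matrix.linftyOpSemiNormedRing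
      letI : NormedRing (Matrix (Fin n) (Fin n) ℝ) := Matrix.linftyOpNormedRing
      letI : NormedAlgebra ℝ (Matrix (Fin n) (Fin n) ℝ) := Matrix.linftyOpNormedAlgebra
      letI : NormedAlgebra ℚ (Matrix (Fin n) (Fin n) ℝ) :=
        NormedAlgebra.restrictScalars ℚ ℝ (Matrix (Fin n) (Fin n) ℝ)
      show Continuous fun s : ℝ => NormedSpace.exp ((-s) • Aᵀ)
      exact NormedSpace.exp_continuous.comp (continuous_neg.smul continuous_const)
    exact h1.matrix_mul continuous_const
  set f : ℝ → ℝ := fun s => ∑ i, ∑ j, (N s i j) ^ 2 with hf_def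
  have hfc : Continuous f := by
    apply continuous_finset_sum _ fun i _ => ?_
    apply continuous_finset_sum _ fun j _ => ?_
    exact (hcontN.matrix_elem i j).pow 2
  obtain ⟨s₀, hs₀, hKb⟩ := (isCompact_Icc (a := (0:ℝ)) (b := T)).exists_isMaxOn
    ⟨0, le_refl 0, hT.le⟩ hfc.continuousOn
  set K := f s₀ with hK_def
  have hK0 : 0 ≤ K := Finset.sum_nonneg fun i _ => Finset.sum_nonneg fun j _ => sq_nonneg _
  have hK1 : (0:ℝ) < K + 1 := by linarith
  -- key bound: |v|² ≤ (K+1) |w|²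
  have hkey : ∀ s ∈ Icc (0:ℝ) T, ∀ v : Fin n → ℝ,
      v ⬝ᵥ v ≤ (K + 1) * (((bᵀ * mexp (s • Aᵀ)) *ᵥ v) ⬝ᵥ ((bᵀ * mexp (s • Aᵀ)) *ᵥ v)) := by
    intro s hs v
    set w := (bᵀ * mexp (s • Aᵀ)) *ᵥ v with hw_def
    have hvN : N s *ᵥ w = v := by
      rw [hw_def, Matrix.mulVec_mulVec, hNM s, Matrix.one_mulVec]
    have hvi : ∀ i, v i = ∑ j, N s i j * w j := by
      intro i; rw [← hvN]; rfl
    have hww : 0 ≤ w ⬝ᵥ w := dot_self_nonneg w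
    calc v ⬝ᵥ v = ∑ i, (∑ j, N s i j * w j) ^ 2 := by
          simp only [dotProduct]
          exact Finset.sum_congr rfl fun i _ => by rw [← hvi i, sq]
      _ ≤ ∑ i, (∑ j, (N s i j) ^ 2) * (∑ j, (w j) ^ 2) :=
          Finset.sum_le_sum fun i _ => Finset.sum_mul_sq_le_sq_mul_sq _ _ _
      _ = f s * (w ⬝ᵥ w) := by
          rw [← Finset.sum_mul]
          congr 1
          simp [dotProduct, sq]
      _ ≤ (K + 1) * (w ⬝ᵥ w) := by
          have hfs : f s ≤ K := hKb hs
          nlinarith [hfs, hww]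
  refine ⟨(c * C * (K + 1))⁻¹, inv_pos.mpr (mul_pos (mul_pos hc hC) hK1), ?_⟩
  intro t ht v
  obtain ⟨ht0, htT⟩ := ht
  have hspos : 0 < T - t := by linarith
  have htIcc : t ∈ Icc (0:ℝ) T := ⟨ht0, by linarith⟩
  have hsIcc : T - t ∈ Icc (0:ℝ) T := ⟨hspos.le, by linarith⟩
  obtain ⟨hgt, hgle⟩ := hg1 t ⟨ht0, htT⟩
  set M : Matrix (Fin n) (Fin n) ℝ := bᵀ * mexp ((T - t) • Aᵀ) with hM_def
  set w := M *ᵥ v with hw_def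
  -- Q t = Mᵀ * (Γ t)⁻¹ * M
  have hEt : mexp ((T - t) • Aᵀ) = (mexp ((T - t) • A))ᵀ := by
    rw [mexp, mexp, ← Matrix.transpose_smul, Matrix.exp_transpose]
  have hMT : Mᵀ = mexp ((T - t) • A) * b := by
    rw [hM_def, Matrix.transpose_mul, Matrix.transpose_transpose, hEt,
      Matrix.transpose_transpose]
  have hQt : Q t = Mᵀ * (Γ t)⁻¹ * M := by
    rw [hQ, hMT, hM_def, Matrix.mul_assoc (mexp ((T - t) • A) * b * (Γ t)⁻¹)]
  have hquad : v ⬝ᵥ (Q t) *ᵥ v = w ⬝ᵥ (Γ t)⁻¹ *ᵥ w := by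
    rw [hQt, ← Matrix.mulVec_mulVec, ← Matrix.mulVec_mulVec, Matrix.dotProduct_mulVec,
      Matrix.vecMul_transpose, ← hw_def]
  -- Γ t inverse
  have hGdet : IsUnit (G t).det := isUnit_iff_ne_zero.mpr (hG t htIcc).det_pos.ne'
  have hΓinv : (Γ t)⁻¹ = (g t)⁻¹ • (G t)⁻¹ := by
    rw [hΓ]
    apply Matrix.inv_eq_left_inv
    rw [Matrix.smul_mul, Matrix.mul_smul, smul_smul, inv_mul_cancel₀ hgt.ne',
      Matrix.nonsing_inv_mul _ hGdet, one_smul]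
  have hsplit : w ⬝ᵥ (Γ t)⁻¹ *ᵥ w = (g t)⁻¹ * (w ⬝ᵥ (G t)⁻¹ *ᵥ w) := by
    rw [hΓinv, Matrix.smul_mulVec, dotProduct_smul, smul_eq_mul]
  have h1 : C⁻¹ * (w ⬝ᵥ w) ≤ w ⬝ᵥ (G t)⁻¹ *ᵥ w :=
    aux_inv_bound (hG t htIcc) hC (hGb t htIcc) w
  have h2 : v ⬝ᵥ v ≤ (K + 1) * (w ⬝ᵥ w) := hkey (T - t) hsIcc v
  have hww : 0 ≤ w ⬝ᵥ w := dot_self_nonneg w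
  have hvv : 0 ≤ v ⬝ᵥ v := dot_self_nonneg v
  have hr : 0 < (T - t) ^ (-α) := Real.rpow_pos_of_pos hspos _
  have hginv : c⁻¹ * (T - t) ^ (-α) ≤ (g t)⁻¹ := by
    have hxpos : 0 < (T - t) ^ α := Real.rpow_pos_of_pos hspos _
    have h3 : (c * (T - t) ^ α)⁻¹ ≤ (g t)⁻¹ := inv_anti₀ hgt hgle
    rwa [mul_inv, ← Real.rpow_neg hspos.le] at h3
  calc (c * C * (K + 1))⁻¹ * (T - t) ^ (-α) * (v ⬝ᵥ v)
      ≤ (c * C * (K + 1))⁻¹ * (T - t) ^ (-α) * ((K + 1) * (w ⬝ᵥ w)) := by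
        apply mul_le_mul_of_nonneg_left h2
        positivity
    _ = (c⁻¹ * (T - t) ^ (-α)) * (C⁻¹ * (w ⬝ᵥ w)) := by
        field_simp
    _ ≤ (g t)⁻¹ * (C⁻¹ * (w ⬝ᵥ w)) := by
        apply mul_le_mul_of_nonneg_right hginv
        positivity
    _ ≤ (g t)⁻¹ * (w ⬝ᵥ (G t)⁻¹ *ᵥ w) := by
        apply mul_le_mul_of_nonneg_left h1
        positivity
    _ = v ⬝ᵥ (Q t) *ᵥ v := by rw [hquad, hsplit]
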